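/- Theorem 4.3 (first part): Every almost-Prüfer ring extension R ⊆ S is quasi-Prüfer. -/

import Mathlib

open Polynomial Submodule Set

set_option maxHeartbeats 1600000
set_option synthInstance.maxHeartbeats 400000

section Helpers

variable {C B : Type*} [CommRing C] [CommRing B] [Algebra C B]

/-- span of the set of coefficients of a polynomial is a finitely generated module. -/
lemma fg_span_range_coeff (p : B[X]) :
    (Submodule.span C (Set.range p.coeff)).FG := by
  classical
  refine ⟨insert 0 (p.support.image p.coeff), le_antisymm ?_ ?_⟩
  · rw [Finset.coe_insert]
    refine span_le.mpr ?_
    rintro z (rfl | hz)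
    · exact zero_mem _
    · rcases Finset.mem_image.mp hz with ⟨i, _, rfl⟩
      exact subset_span ⟨i, rfl⟩
  · refine span_le.mpr ?_
    rintro _ ⟨i, rfl⟩
    rw [Finset.coe_insert]
    by_cases h : i ∈ p.support
    · exact subset_span (Set.mem_insert_of_mem _ (Finset.mem_coe.mpr (Finset.mem_image_of_mem _ h)))
    · rw [notMem_support_iff.mp h]
      exact zero_mem _

/-- Elements of a finitely generated multiplicatively closed submodule containing 1
are integral. -/
lemma isIntegral_of_mem_mulClosed_fg (N : Submodule C B) (h1 : (1:B) ∈ N)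
    (hmul : ∀ a ∈ N, ∀ b ∈ N, a * b ∈ N) (hfg : N.FG)
    {ξ : B} (hξ : ξ ∈ N) : IsIntegral C ξ := by
  let Sa : Subalgebra C B :=
    { carrier := N
      mul_mem' := fun {a b} ha hb => hmul a ha b hb
      add_mem' := fun {a b} ha hb => N.add_mem ha hb
      one_mem' := h1
      zero_mem' := N.zero_mem
      algebraMap_mem' := fun r => by
        have : algebraMap C B r = r • (1:B) := by
          rw [Algebra.smul_def, mul_one]
        rw [this]
        exact N.smul_mem r h1 }
  have hts : Sa.toSubmodule = N := by
    ext z; exact Iff.rfl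
  exact IsIntegral.of_mem_of_fg Sa (by rw [hts]; exact hfg) ξ hξ

end Helpers

section DM

/- A hand-rolled "degree one Dedekind–Mertens" package for a factorization
`F = (X - C t) * g`. -/

variable {C B : Type*} [CommRing C] [CommRing B] [Algebra C B]
variable (t : B) (g F : B[X])

lemma dm_coeff_succ (hF : F = (X - Polynomial.C t) * g) (k : ℕ) :
    F.coeff (k+1) = g.coeff k - t * g.coeff (k+1) := by
  rw [hF, sub_mul, coeff_sub, coeff_C_mul, coeff_X_mul]

lemma dm_coeff_zero (hF : F = (X - Polynomial.C t) * g) :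
    F.coeff 0 = -(t * g.coeff 0) := by
  rw [hF, sub_mul, coeff_sub, coeff_C_mul]
  simp

lemma dm_main (hF : F = (X - Polynomial.C t) * g) (i j : ℕ) :
    g.coeff i * g.coeff j ∈
      Submodule.span C (Set.range F.coeff) * Submodule.span C (Set.range g.coeff) := by
  set 𝔉 := Submodule.span C (Set.range F.coeff) with h𝔉
  set 𝔊 := Submodule.span C (Set.range g.coeff) with h𝔊
  have hFm : ∀ k, F.coeff k ∈ 𝔉 := fun k => subset_span ⟨k, rfl⟩
  have hGm : ∀ k, g.coeff k ∈ 𝔊 := fun k => subset_span ⟨k, rfl⟩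
  set N := g.natDegree with hN
  -- descending induction on j
  have key : ∀ d : ℕ, ∀ j i : ℕ, N < j + d → g.coeff i * g.coeff j ∈ 𝔉 * 𝔊 := by
    intro d
    induction d with
    | zero =>
      intro j i hj
      rw [show g.coeff j = 0 from g.coeff_eq_zero_of_natDegree_lt (by omega), mul_zero]
      exact zero_mem _
    | succ d ih =>
      intro j i hj
      have hIH : ∀ i', g.coeff i' * g.coeff (j+1) ∈ 𝔉 * 𝔊 := fun i' => ih (j+1) i' (by omega)
      cases i with
      | zero =>
        have hid : g.coeff 0 * g.coeff j =
            F.coeff (j+1) * g.coeff 0 - F.coeff 0 * g.coeff (j+1) := by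
          rw [dm_coeff_succ t g F hF j, dm_coeff_zero t g F hF]
          ring
        rw [hid]
        exact sub_mem (mul_mem_mul (hFm _) (hGm _)) (mul_mem_mul (hFm _) (hGm _))
      | succ i =>
        have hid : g.coeff (i+1) * g.coeff j =
            F.coeff (j+1) * g.coeff (i+1) - F.coeff (i+1) * g.coeff (j+1)
              + g.coeff i * g.coeff (j+1) := by
          rw [dm_coeff_succ t g F hF j, dm_coeff_succ t g F hF i]
          ring
        rw [hid]
        exact add_mem (sub_mem (mul_mem_mul (hFm _) (hGm _)) (mul_mem_mul (hFm _) (hGm _)))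
          (hIH i)
  exact key (N+1) j i (by omega)

lemma dm_comp (hF : F = (X - Polynomial.C t) * g) (i j : ℕ) :
    t * (g.coeff i * g.coeff j) ∈
      Submodule.span C (Set.range F.coeff) * Submodule.span C (Set.range g.coeff) := by
  have hFm : ∀ k, F.coeff k ∈ Submodule.span C (Set.range F.coeff) :=
    fun k => subset_span ⟨k, rfl⟩
  have hGm : ∀ k, g.coeff k ∈ Submodule.span C (Set.range g.coeff) :=
    fun k => subset_span ⟨k, rfl⟩
  cases i with
  | zero =>
    have hid : t * (g.coeff 0 * g.coeff j) = -(F.coeff 0 * g.coeff j) := by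
      rw [dm_coeff_zero t g F hF]; ring
    rw [hid]
    exact neg_mem (mul_mem_mul (hFm _) (hGm _))
  | succ i =>
    have hid : t * (g.coeff (i+1) * g.coeff j) =
        g.coeff i * g.coeff j - F.coeff (i+1) * g.coeff j := by
      rw [dm_coeff_succ t g F hF i]; ring
    rw [hid]
    exact sub_mem (dm_main t g F hF i j) (mul_mem_mul (hFm _) (hGm _))

lemma dm_sub (hF : F = (X - Polynomial.C t) * g) :
    Submodule.span C (Set.range F.coeff) ≤
      Submodule.span C {1, t} * Submodule.span C (Set.range g.coeff) := by
  have hGm : ∀ k, g.coeff k ∈ Submodule.span C (Set.range g.coeff) :=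
    fun k => subset_span ⟨k, rfl⟩
  have h1 : (1:B) ∈ Submodule.span C ({1, t} : Set B) := subset_span (by left; rfl)
  have ht : t ∈ Submodule.span C ({1, t} : Set B) := subset_span (by right; rfl)
  refine span_le.mpr ?_
  rintro _ ⟨k, rfl⟩
  cases k with
  | zero =>
    rw [dm_coeff_zero t g F hF]
    exact neg_mem (mul_mem_mul ht (hGm 0))
  | succ k =>
    rw [dm_coeff_succ t g F hF k]
    refine sub_mem ?_ (mul_mem_mul ht (hGm _))
    have : g.coeff k = (1:B) * g.coeff k := by ring
    rw [this]
    exact mul_mem_mul h1 (hGm _)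

lemma dm_eq (hF : F = (X - Polynomial.C t) * g) :
    Submodule.span C ({1, t} : Set B) *
        (Submodule.span C (Set.range g.coeff) * Submodule.span C (Set.range g.coeff)) =
      Submodule.span C (Set.range F.coeff) * Submodule.span C (Set.range g.coeff) := by
  apply le_antisymm
  · -- each m * w with w ∈ 𝔊*𝔊 lands in 𝔉𝔊
    refine mul_le.mpr ?_
    intro m hm w hw
    -- first: w ∈ 𝔊*𝔊 → w ∈ 𝔉𝔊 ∧ t*w ∈ 𝔉𝔊
    have hKle : Submodule.span C (Set.range g.coeff) * Submodule.span C (Set.range g.coeff) ≤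
        (Submodule.span C (Set.range F.coeff) * Submodule.span C (Set.range g.coeff)) ⊓
          Submodule.comap (LinearMap.mulLeft C t)
            (Submodule.span C (Set.range F.coeff) * Submodule.span C (Set.range g.coeff)) := by
      rw [Submodule.span_mul_span]
      refine span_le.mpr ?_
      rintro z hz
      rcases Set.mem_mul.mp hz with ⟨a, ha, b, hb, rfl⟩
      rcases ha with ⟨i, rfl⟩
      rcases hb with ⟨j, rfl⟩
      exact ⟨dm_main t g F hF i j, dm_comp t g F hF i j⟩
    have hw' : w ∈ Submodule.span C (Set.range F.coeff) * Submodule.span C (Set.range g.coeff)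
        ∧ t * w ∈ Submodule.span C (Set.range F.coeff) * Submodule.span C (Set.range g.coeff) :=
      ⟨(hKle hw).1, (hKle hw).2⟩
    rcases mem_span_pair.mp hm with ⟨c1, c2, rfl⟩
    have : (c1 • (1:B) + c2 • t) * w = c1 • w + c2 • (t * w) := by
      rw [add_mul, smul_mul_assoc, smul_mul_assoc, one_mul]
    rw [this]
    exact add_mem (smul_mem _ _ hw'.1) (smul_mem _ _ hw'.2)
  · rw [← mul_assoc]
    exact mul_le_mul' (dm_sub t g F hF) le_rfl

end DM

lemma exists_top {α : Type*} (r : α → α → Prop) :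
    ∀ l : List α, l ≠ [] → (∀ a ∈ l, r a a) → (∀ a ∈ l, ∀ b ∈ l, r a b ∨ r b a) →
      (∀ a ∈ l, ∀ b ∈ l, ∀ c ∈ l, r a b → r b c → r a c) →
      ∃ b ∈ l, ∀ a ∈ l, r a b := by
  intro l
  induction l with
  | nil => intro h; exact absurd rfl h
  | cons hd tl ih =>
    intro _ hrefl htot htrans
    by_cases hl : tl = []
    · subst hl
      refine ⟨hd, List.mem_cons_self, fun a ha => ?_⟩
      rcases List.mem_cons.mp ha with h | ha
      · subst h; exact hrefl _ (List.mem_cons_self)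
      · exact absurd ha (List.not_mem_nil)
    · obtain ⟨bb, hbb, htop⟩ := ih hl
        (fun a ha => hrefl a (List.mem_cons_of_mem _ ha))
        (fun a ha b hb => htot a (List.mem_cons_of_mem _ ha) b (List.mem_cons_of_mem _ hb))
        (fun a ha b hb c hc hab hbc => htrans a (List.mem_cons_of_mem _ ha)
          b (List.mem_cons_of_mem _ hb) c (List.mem_cons_of_mem _ hc) hab hbc)
      rcases htot hd (List.mem_cons_self) bb (List.mem_cons_of_mem _ hbb) with hxb | hbx
      · refine ⟨bb, List.mem_cons_of_mem _ hbb, fun a ha => ?_⟩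
        rcases List.mem_cons.mp ha with h | ha
        · subst h; exact hxb
        · exact htop a ha
      · refine ⟨hd, List.mem_cons_self, fun a ha => ?_⟩
        rcases List.mem_cons.mp ha with h | ha
        · subst h; exact hrefl _ (List.mem_cons_self)
        · exact htrans a (List.mem_cons_of_mem _ ha) bb (List.mem_cons_of_mem _ hbb)
            hd (List.mem_cons_self) (htop a ha) hbx

section INVP

variable {R T : Type*} [CommRing R] [CommRing T] [Algebra R T]

theorem invp_aux
    (hfg : ∀ p : T[X], (Submodule.span R (Set.range p.coeff)).FG)
    (hint : ∀ (N : Submodule R T), (1:T) ∈ N → (∀ a ∈ N, ∀ b ∈ N, a * b ∈ N) → N.FG →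
      ∀ ξ ∈ N, IsIntegral R ξ)
    (hdmmain : ∀ (t : T) (g F : T[X]), F = (X - Polynomial.C t) * g → ∀ i j : ℕ,
      g.coeff i * g.coeff j ∈
        Submodule.span R (Set.range F.coeff) * Submodule.span R (Set.range g.coeff))
    (hdmcomp : ∀ (t : T) (g F : T[X]), F = (X - Polynomial.C t) * g → ∀ i j : ℕ,
      t * (g.coeff i * g.coeff j) ∈
        Submodule.span R (Set.range F.coeff) * Submodule.span R (Set.range g.coeff))
    (hP : ∀ V : Subalgebra R T, ∀ x : T, IsIntegral V x → x ∈ V) (t : T) :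
    ∃ a b c d : R,
      algebraMap R T a + algebraMap R T b * t = 1 ∧
      algebraMap R T b * t = algebraMap R T c ∧
      algebraMap R T a * t = algebraMap R T d := by
  classical
  -- Step 1 : t ∈ R[t²]
  have hsq : (t^2 : T) ∈ Algebra.adjoin R ({t^2} : Set T) :=
    Algebra.self_mem_adjoin_singleton R _
  have hti : IsIntegral (Algebra.adjoin R ({t^2} : Set T)) t := by
    refine ⟨X^2 - Polynomial.C ⟨t^2, hsq⟩, monic_X_pow_sub_C _ (by norm_num), ?_⟩
    rw [eval₂_sub, eval₂_X_pow, eval₂_C]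
    have : algebraMap (Algebra.adjoin R ({t^2} : Set T)) T ⟨t^2, hsq⟩ = t^2 := rfl
    rw [this, sub_self]
  have ht2 : t ∈ Algebra.adjoin R ({t^2} : Set T) := hP _ t hti
  rw [Algebra.adjoin_singleton_eq_range_aeval] at ht2
  obtain ⟨p, hp0⟩ := ht2
  have hp : Polynomial.aeval (t^2) p = t := hp0
  -- Step 2 : the annihilating polynomial f with coefficient -1 at X
  set f : R[X] := expand R 2 p - X with hf
  have hfc1 : f.coeff 1 = -1 := by
    rw [hf, coeff_sub, coeff_expand (by norm_num : 0 < 2), coeff_X_one]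
    norm_num
  have hfroot : Polynomial.aeval t f = 0 := by
    rw [hf, map_sub, expand_aeval, aeval_X, hp, sub_self]
  set fT : T[X] := f.map (algebraMap R T) with hfT
  have hfTroot : fT.eval t = 0 := by
    rw [hfT, eval_map, ← aeval_def, hfroot]
  -- Step 3 : Horner quotient
  set q : T[X] := fT /ₘ (X - Polynomial.C t) with hq
  have hfq : fT = (X - Polynomial.C t) * q := by
    have h := modByMonic_add_div fT (X - Polynomial.C t)
    rw [modByMonic_X_sub_C_eq_C_eval, hfTroot, map_zero, zero_add] at h
    exact h.symm
  -- Step 4 : span of coefficients of q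
  set Q0 : Submodule R T := Submodule.span R (Set.range q.coeff) with hQ0
  have hFle : Submodule.span R (Set.range fT.coeff) ≤ (1 : Submodule R T) := by
    refine span_le.mpr ?_
    rintro _ ⟨k, rfl⟩
    rw [hfT, coeff_map]
    exact Submodule.mem_one.mpr ⟨f.coeff k, rfl⟩
  have habs : Submodule.span R (Set.range fT.coeff) * Q0 ≤ Q0 := by
    calc Submodule.span R (Set.range fT.coeff) * Q0 ≤ (1 : Submodule R T) * Q0 :=
          mul_le_mul' hFle le_rfl
      _ = Q0 := one_mul Q0
  have hmulQ : ∀ i j : ℕ, q.coeff i * q.coeff j ∈ Q0 :=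
    fun i j => habs (hdmmain t q fT hfq i j)
  have hmulQt : ∀ i j : ℕ, t * (q.coeff i * q.coeff j) ∈ Q0 :=
    fun i j => habs (hdmcomp t q fT hfq i j)
  -- Step 5 : the multiplicatively closed f.g. module 𝔗 = 1 ⊔ Q0 ⊔ t·Q0
  set tQ : Submodule R T := Submodule.span R ({t} : Set T) * Q0 with htQ
  set 𝔗 : Submodule R T := (1 : Submodule R T) ⊔ Q0 ⊔ tQ with h𝔗
  have hQQ : Q0 * Q0 ≤ Q0 := by
    rw [hQ0, Submodule.span_mul_span]
    refine span_le.mpr ?_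
    rintro z hz
    rcases Set.mem_mul.mp hz with ⟨a, ⟨i, rfl⟩, b, ⟨j, rfl⟩, rfl⟩
    exact hmulQ i j
  have htQQ : Submodule.span R ({t} : Set T) * (Q0 * Q0) ≤ Q0 := by
    rw [hQ0, Submodule.span_mul_span, Submodule.span_mul_span]
    refine span_le.mpr ?_
    rintro z hz
    rcases Set.mem_mul.mp hz with ⟨a, ha, b, hb, rfl⟩
    rcases ha with rfl
    rcases Set.mem_mul.mp hb with ⟨u, ⟨i, rfl⟩, v, ⟨j, rfl⟩, rfl⟩
    exact hmulQt i j
  have hTT : 𝔗 * 𝔗 ≤ 𝔗 := by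
    have l1 : (1 : Submodule R T) ≤ 𝔗 := le_trans le_sup_left le_sup_left
    have lQ : Q0 ≤ 𝔗 := le_trans le_sup_right le_sup_left
    have ltQ : tQ ≤ 𝔗 := le_sup_right
    rw [h𝔗, Submodule.sup_mul, Submodule.sup_mul]
    refine sup_le (sup_le ?_ ?_) ?_
    · rw [one_mul]
    · rw [Submodule.mul_sup, Submodule.mul_sup]
      refine sup_le (sup_le ?_ ?_) ?_
      · rw [mul_one]; exact lQ
      · exact le_trans hQQ lQ
      · -- Q0 * tQ ≤ Q0
        have : Q0 * tQ = Submodule.span R ({t} : Set T) * (Q0 * Q0) := by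
          rw [htQ]; ring
        rw [this]
        exact le_trans htQQ lQ
    · rw [Submodule.mul_sup, Submodule.mul_sup]
      refine sup_le (sup_le ?_ ?_) ?_
      · rw [mul_one]
        exact le_sup_right
      · have : tQ * Q0 = Submodule.span R ({t} : Set T) * (Q0 * Q0) := by
          rw [htQ]; ring
        rw [this]
        exact le_trans htQQ lQ
      · have : tQ * tQ = Submodule.span R ({t} : Set T) *
            (Submodule.span R ({t} : Set T) * (Q0 * Q0)) := by
          rw [htQ]; ring
        rw [this]
        refine le_trans (mul_le_mul' le_rfl htQQ) ltQ
  have hT1 : (1:T) ∈ 𝔗 :=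
    Submodule.mem_sup_left (Submodule.mem_sup_left (Submodule.mem_one.mpr ⟨1, map_one _⟩))
  have hTfg : 𝔗.FG := by
    refine Submodule.FG.sup (Submodule.FG.sup ?_ (hfg q)) ?_
    · exact ⟨{1}, by rw [Finset.coe_singleton, Submodule.one_eq_span]⟩
    · exact Submodule.FG.mul ⟨{t}, by rw [Finset.coe_singleton]⟩ (hfg q)
  have hTint : ∀ ξ ∈ 𝔗, IsIntegral R ξ :=
    fun ξ hξ => hint 𝔗 hT1 (fun a ha b hb => hTT (mul_mem_mul ha hb)) hTfg ξ hξ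
  -- Step 6 : coefficients of q (and t * coefficients) are in the image of R
  have hcoeffR : ∀ i : ℕ, ∃ r : R, algebraMap R T r = q.coeff i := by
    intro i
    have h1 : IsIntegral R (q.coeff i) := hTint _
      (Submodule.mem_sup_left (Submodule.mem_sup_right (subset_span ⟨i, rfl⟩)))
    have h2 : q.coeff i ∈ (⊥ : Subalgebra R T) := hP ⊥ _ (IsIntegral.tower_top h1)
    rwa [Algebra.mem_bot] at h2
  have hcoefftR : ∀ i : ℕ, ∃ r : R, algebraMap R T r = t * q.coeff i := by
    intro i
    have hmem : t * q.coeff i ∈ tQ :=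
      mul_mem_mul (subset_span rfl) (subset_span ⟨i, rfl⟩)
    have h1 : IsIntegral R (t * q.coeff i) := hTint _ (Submodule.mem_sup_right hmem)
    have h2 : t * q.coeff i ∈ (⊥ : Subalgebra R T) := hP ⊥ _ (IsIntegral.tower_top h1)
    rwa [Algebra.mem_bot] at h2
  obtain ⟨r0, hr0⟩ := hcoeffR 0
  obtain ⟨r1, hr1⟩ := hcoeffR 1
  obtain ⟨s0, hs0⟩ := hcoefftR 0
  obtain ⟨s1, hs1⟩ := hcoefftR 1
  -- Step 7 : Horner coefficient relations
  have hrel1 : fT.coeff 1 = q.coeff 0 - t * q.coeff 1 := by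
    have : fT.coeff (0+1) = q.coeff 0 - t * q.coeff (0+1) := by
      rw [hfq, sub_mul, coeff_sub, coeff_C_mul, coeff_X_mul]
    simpa using this
  have hrel0 : fT.coeff 0 = -(t * q.coeff 0) := by
    rw [hfq, sub_mul, coeff_sub, coeff_C_mul]
    simp
  have hft1 : fT.coeff 1 = -1 := by
    rw [hfT, coeff_map, hfc1, map_neg, map_one]
  -- Step 8 : assemble the witnesses
  refine ⟨-r0, r1, s1, -s0, ?_, ?_, ?_⟩
  · rw [map_neg, hr0, hr1]
    have : q.coeff 0 - t * q.coeff 1 = -1 := by rw [← hrel1, hft1]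
    have h2 : q.coeff 1 * t = t * q.coeff 1 := mul_comm _ _
    rw [h2]
    linear_combination -this
  · rw [hr1, hs1, mul_comm]
  · rw [map_neg, map_neg, hr0, hs0]
    rw [neg_mul, mul_comm]

end INVP

theorem modinv {R S : Type*} [CommRing R] [CommRing S] [Algebra R S] [Nontrivial S]
    (hinj : Function.Injective (algebraMap R S))
    (fS : S[X]) (hfm : fS.Monic)
    (a b c d : ℕ → R)
    (h1 : ∀ i, algebraMap R S (a i) + algebraMap R S (b i) * fS.coeff i = 1)
    (h2 : ∀ i, algebraMap R S (b i) * fS.coeff i = algebraMap R S (c i))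
    (h3 : ∀ i, algebraMap R S (a i) * fS.coeff i = algebraMap R S (d i))
    (P Q Cc Dd : ℕ → ℕ → R)
    (g1 : ∀ i j, algebraMap R S (P i j) +
      algebraMap R S (Q i j) * (fS.coeff i * algebraMap R S (b j)) = 1)
    (g2 : ∀ i j, algebraMap R S (Q i j) * (fS.coeff i * algebraMap R S (b j)) =
      algebraMap R S (Cc i j))
    (g3 : ∀ i j, algebraMap R S (P i j) * (fS.coeff i * algebraMap R S (b j)) =
      algebraMap R S (Dd i j)) :
    ∃ V' : Submodule (integralClosure R S) S, V'.FG ∧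
      Submodule.span (integralClosure R S) (Set.range fS.coeff) * V' = 1 := by
  classical
  set A := integralClosure R S with hA
  haveI : Nontrivial A := ⟨⟨1, 0, fun h => one_ne_zero (α := S) (congrArg Subtype.val h)⟩⟩
  set ιS := algebraMap R S with hιS
  set ιA := algebraMap R A with hιA
  have hcoe : ∀ r : R, ((ιA r : A) : S) = ιS r := fun r => by
    rw [hιA, hιS]; exact (IsScalarTower.algebraMap_apply R A S r).symm
  set m := fS.natDegree with hm
  have hcm : fS.coeff m = 1 := hfm.coeff_natDegree
  have hczero : ∀ k, m < k → fS.coeff k = 0 := fun k hk => coeff_eq_zero_of_natDegree_lt hk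
  have hmemA : ∀ r : R, ιS r ∈ A := fun r => Subalgebra.algebraMap_mem A r
  set Dset : Set S := {s : S | ∀ i : ℕ, s * fS.coeff i ∈ A} with hDset
  set Wset : Set S := {w : S | ∃ s ∈ Dset, ∃ i : ℕ, w = s * fS.coeff i} with hWset
  set 𝔚 : Submodule A S := Submodule.span A Wset with h𝔚
  set I : Ideal A := 𝔚.comap (Algebra.linearMap A S) with hI
  have hac : ∀ j, ιA (a j) + ιA (c j) = 1 := by
    intro j
    have h : ιS (a j + c j) = ιS 1 := by
      rw [map_add, map_one, ← h2 j, h1 j]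
    have h' := hinj h
    rw [← map_add, h', map_one]
  have hPC : ∀ i j, ιA (P i j) + ιA (Cc i j) = 1 := by
    intro i j
    have h : ιS (P i j + Cc i j) = ιS 1 := by
      rw [map_add, map_one, ← g2 i j, g1 i j]
    have h' := hinj h
    rw [← map_add, h', map_one]
  have hItop : I = ⊤ := by
    by_contra hne
    obtain ⟨M, hMmax, hMle⟩ := Ideal.exists_le_maximal I hne
    have hMprime : M.IsPrime := hMmax.isPrime
    have hnm_mul : ∀ u v : A, u ∉ M → v ∉ M → u * v ∉ M := by
      intro u v hu hv h
      rcases hMprime.mem_or_mem h with h | h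
      exacts [hu h, hv h]
    have h1M : (1 : A) ∉ M := fun h => hMprime.ne_top (Ideal.eq_top_of_isUnit_mem M h isUnit_one)
    set Jinv : Finset ℕ := (Finset.range (m+1)).filter (fun j => ιA (c j) ∉ M) with hJinv
    suffices hwit : ∃ w : A, w ∈ I ∧ w ∉ M by
      rcases hwit with ⟨w, hwI, hwM⟩
      exact hwM (hMle hwI)
    by_cases hJ : Jinv = ∅
    · -- all coefficients are "integral type" at M
      have haM : ∀ j ∈ Finset.range (m+1), ιA (a j) ∉ M := by
        intro j hj hmem
        have hcj : ιA (c j) ∈ M := by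
          by_contra hc
          have : j ∈ Jinv := Finset.mem_filter.mpr ⟨hj, hc⟩
          rw [hJ] at this
          exact absurd this (Finset.notMem_empty j)
        exact h1M (by rw [← hac j]; exact Ideal.add_mem M hmem hcj)
      set U : R := ∏ j ∈ Finset.range (m+1), a j with hU
      have hsD : (ιS U) ∈ Dset := by
        intro i
        by_cases hi : i ≤ m
        · have himem : i ∈ Finset.range (m+1) := Finset.mem_range.mpr (by omega)
          have hsplit : ιS U = ιS (a i) * ιS (∏ j ∈ (Finset.range (m+1)).erase i, a j) := by
            rw [hU, ← map_mul, Finset.mul_prod_erase _ _ himem]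
          have e : ιS U * fS.coeff i =
              ιS (∏ j ∈ (Finset.range (m+1)).erase i, a j) * (ιS (a i) * fS.coeff i) := by
            rw [hsplit]; ring
          rw [e, h3 i, ← map_mul]
          exact hmemA _
        · rw [hczero i (by omega), mul_zero]
          exact Subalgebra.zero_mem A
      refine ⟨ιA U, ?_, ?_⟩
      · rw [hI, Submodule.mem_comap]
        have : (Algebra.linearMap A S) (ιA U) = ιS U := hcoe U
        rw [this]
        have : ιS U = ιS U * fS.coeff m := by rw [hcm, mul_one]
        rw [this]
        exact subset_span ⟨ιS U, hsD, m, rfl⟩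
      · have : ιA U = ∏ j ∈ Finset.range (m+1), ιA (a j) := map_prod ιA a _
        rw [this]
        exact Finset.prod_induction _ (fun z => z ∉ M) (fun u v hu hv => hnm_mul u v hu hv)
          h1M haM
    · -- there is an "invertible type" coefficient : run the tournament
      have hJne : Jinv.toList ≠ [] := by
        intro h
        exact hJ (Finset.toList_eq_nil.mp h)
      set Bnd : ℕ → ℕ → Prop := fun i j => ∃ u rr : R, ιA u ∉ M ∧
        ιS u * (fS.coeff i * ιS (b j)) = ιS rr with hBnd
      have hrefl : ∀ i, Bnd i i := by
        intro i
        refine ⟨1, c i, by rw [map_one]; exact h1M, ?_⟩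
        rw [map_one, one_mul, mul_comm]
        exact h2 i
      have htot : ∀ i j, Bnd i j ∨ Bnd j i := by
        intro i j
        by_cases hp : ιA (P i j) ∉ M
        · exact Or.inl ⟨P i j, Dd i j, hp, g3 i j⟩
        · push_neg at hp
          have hcc : ιA (Cc i j) ∉ M := by
            intro hmem
            exact h1M (by rw [← hPC i j]; exact Ideal.add_mem M hp hmem)
          refine Or.inr ⟨Cc i j, Q i j * c i * c j, hcc, ?_⟩
          rw [← g2 i j, map_mul, map_mul, ← h2 i, ← h2 j]
          ring
      have htrans : ∀ i j k, ιA (c j) ∉ M → Bnd i j → Bnd j k → Bnd i k := by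
        rintro i j k hcj ⟨u1, r1, hu1, e1⟩ ⟨u2, r2, hu2, e2⟩
        refine ⟨u1 * u2 * c j, r1 * r2, ?_, ?_⟩
        · rw [map_mul, map_mul]
          exact hnm_mul _ _ (hnm_mul _ _ hu1 hu2) hcj
        · rw [map_mul, map_mul, map_mul, ← h2 j, ← e1, ← e2]
          ring
      obtain ⟨jst, hjstl, htop⟩ := exists_top Bnd Jinv.toList hJne
        (fun i _ => hrefl i) (fun i _ j _ => htot i j)
        (fun i _ j hj k _ hij hjk => htrans i j k
          (Finset.mem_filter.mp (Finset.mem_toList.mp hj)).2 hij hjk)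
      have hjst : jst ∈ Jinv := Finset.mem_toList.mp hjstl
      have hcjst : ιA (c jst) ∉ M := (Finset.mem_filter.mp hjst).2
      have hall : ∀ i : ℕ, Bnd i jst := by
        intro i
        by_cases hiJ : i ∈ Jinv
        · exact htop i (Finset.mem_toList.mpr hiJ)
        · by_cases hi : i ≤ m
          · have hci : ιA (c i) ∈ M := by
              by_contra hc
              exact hiJ (Finset.mem_filter.mpr ⟨Finset.mem_range.mpr (by omega), hc⟩)
            have hai : ιA (a i) ∉ M := by
              intro hmem
              exact h1M (by rw [← hac i]; exact Ideal.add_mem M hmem hci)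
            refine ⟨a i, d i * b jst, hai, ?_⟩
            rw [map_mul, ← h3 i]
            ring
          · refine ⟨1, 0, by rw [map_one]; exact h1M, ?_⟩
            rw [map_one, one_mul, hczero i (by omega), zero_mul, map_zero]
      choose u rr hu he using hall
      set U : R := ∏ i ∈ Finset.range (m+1), u i with hU
      have hsD : ιS (U * b jst) ∈ Dset := by
        intro k
        by_cases hk : k ≤ m
        · have hkmem : k ∈ Finset.range (m+1) := Finset.mem_range.mpr (by omega)
          have hsplit : ιS U = ιS (u k) * ιS (∏ j ∈ (Finset.range (m+1)).erase k, u j) := by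
            rw [hU, ← map_mul, Finset.mul_prod_erase _ _ hkmem]
          have e : ιS (U * b jst) * fS.coeff k =
              ιS (∏ j ∈ (Finset.range (m+1)).erase k, u j) *
                (ιS (u k) * (fS.coeff k * ιS (b jst))) := by
            rw [map_mul, hsplit]; ring
          rw [e, he k, ← map_mul]
          exact hmemA _
        · rw [hczero k (by omega), mul_zero]
          exact Subalgebra.zero_mem A
      refine ⟨ιA (U * c jst), ?_, ?_⟩
      · rw [hI, Submodule.mem_comap]
        have h0 : (Algebra.linearMap A S) (ιA (U * c jst)) = ιS (U * c jst) := hcoe _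
        have h1' : ιS (U * c jst) = ιS (U * b jst) * fS.coeff jst := by
          rw [map_mul, map_mul, ← h2 jst]
          ring
        rw [h0, h1']
        exact subset_span ⟨ιS (U * b jst), hsD, jst, rfl⟩
      · rw [map_mul]
        refine hnm_mul _ _ ?_ hcjst
        have : ιA U = ∏ j ∈ Finset.range (m+1), ιA (u j) := map_prod ιA u _
        rw [this]
        exact Finset.prod_induction _ (fun z => z ∉ M) (fun p q hp hq => hnm_mul p q hp hq)
          h1M (fun j _ => hu j)
  -- extract the finite inverse module
  have h1W : (1 : S) ∈ 𝔚 := by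
    have h1I : (1 : A) ∈ I := by rw [hItop]; trivial
    rw [hI, Submodule.mem_comap] at h1I
    simpa using h1I
  obtain ⟨n, f, g, hsum⟩ := Submodule.mem_span_set'.mp h1W
  have hg : ∀ i, ∃ s ∈ Dset, ∃ k : ℕ, (g i : S) = s * fS.coeff k := fun i => (g i).2
  choose s hsmem k hk using hg
  refine ⟨Submodule.span A (Set.range s), Submodule.fg_span (Set.finite_range s), ?_⟩
  apply le_antisymm
  · rw [Submodule.span_mul_span]
    refine span_le.mpr ?_
    rintro z hz
    rcases Set.mem_mul.mp hz with ⟨w1, ⟨ci, rfl⟩, w2, ⟨i, rfl⟩, rfl⟩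
    exact Submodule.mem_one.mpr ⟨⟨s i * fS.coeff ci, hsmem i ci⟩,
      mul_comm (s i) (fS.coeff ci)⟩
  · intro z hz
    rcases Submodule.mem_one.mp hz with ⟨y, rfl⟩
    have h1mem : (1 : S) ∈ Submodule.span A (Set.range fS.coeff) * Submodule.span A (Set.range s) := by
      rw [← hsum]
      refine Submodule.sum_mem _ ?_
      intro i _
      refine Submodule.smul_mem _ _ ?_
      rw [hk i, mul_comm (s i) (fS.coeff (k i))]
      exact mul_mem_mul (subset_span (⟨k i, rfl⟩ : fS.coeff (k i) ∈ Set.range fS.coeff))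
        (subset_span (⟨i, rfl⟩ : s i ∈ Set.range s))
    have : algebraMap A S y = y • (1 : S) := by
      rw [Algebra.algebraMap_eq_smul_one]
    rw [this]
    exact Submodule.smul_mem _ _ h1mem

section Main

variable {R S : Type*} [CommRing R] [CommRing S] [Algebra R S]

/-- INVP transported to `S` : invertibility data for any element of the Prüfer subring. -/
theorem invpS (T : Subalgebra R S)
    (hPT : ∀ V : Subalgebra R T, ∀ y : T, IsIntegral V y → y ∈ V) (t : T) :
    ∃ a b c d : R,
      algebraMap R S a + algebraMap R S b * (t : S) = 1 ∧
      algebraMap R S b * (t : S) = algebraMap R S c ∧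
      algebraMap R S a * (t : S) = algebraMap R S d := by
  obtain ⟨a, b, c, d, e1, e2, e3⟩ := invp_aux
    (fun p => fg_span_range_coeff p)
    (fun N h1 hmul hfg ξ hξ => isIntegral_of_mem_mulClosed_fg N h1 hmul hfg hξ)
    (fun t g F hF i j => dm_main t g F hF i j)
    (fun t g F hF i j => dm_comp t g F hF i j)
    hPT t
  have hval : ∀ r : R, ((algebraMap R T r : T) : S) = algebraMap R S r := fun r => by simp
  refine ⟨a, b, c, d, ?_, ?_, ?_⟩
  · have := congrArg (Subtype.val) e1
    push_cast at this
    exact this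
  · have := congrArg (Subtype.val) e2
    push_cast at this
    exact this
  · have := congrArg (Subtype.val) e3
    push_cast at this
    exact this

theorem inv_pair [Nontrivial S] (hinj : Function.Injective (algebraMap R S))
    (T : Subalgebra R S)
    (hPT : ∀ V : Subalgebra R T, ∀ y : T, IsIntegral V y → y ∈ V)
    (hTS : Algebra.IsIntegral T S) (x : S) :
    ∃ α β : S, α ∈ integralClosure R S ∧ β ∈ integralClosure R S ∧
      x * α ∈ integralClosure R S ∧ x * β ∈ integralClosure R S ∧ α + x * β = 1 := by
  classical
  set A := integralClosure R S with hA
  set ιS := algebraMap R S with hιS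
  obtain ⟨fT', hmono, hroot⟩ := hTS.isIntegral x
  set fS : S[X] := fT'.map (algebraMap T S) with hfS
  have hfSm : fS.Monic := hmono.map _
  have hfSroot : fS.eval x = 0 := by rw [hfS, eval_map]; exact hroot
  set gg : S[X] := fS /ₘ (X - Polynomial.C x) with hgg
  have hfq : fS = (X - Polynomial.C x) * gg := by
    have h := modByMonic_add_div fS (X - Polynomial.C x)
    rw [modByMonic_X_sub_C_eq_C_eval, hfSroot, map_zero, zero_add] at h
    exact h.symm
  have hτ : ∀ i : ℕ, fS.coeff i = ((fT'.coeff i : T) : S) := fun i => by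
    rw [hfS, coeff_map]; rfl
  -- INVP data for the coefficients
  have hId := invpS T hPT
  choose a b c d h1' h2' h3' using fun i : ℕ => hId (fT'.coeff i)
  have h1 : ∀ i, ιS (a i) + ιS (b i) * fS.coeff i = 1 := fun i => by
    rw [hτ i]; exact h1' i
  have h2 : ∀ i, ιS (b i) * fS.coeff i = ιS (c i) := fun i => by
    rw [hτ i]; exact h2' i
  have h3 : ∀ i, ιS (a i) * fS.coeff i = ιS (d i) := fun i => by
    rw [hτ i]; exact h3' i
  -- INVP data for the pair elements
  have hvalT : ∀ r : R, ((algebraMap R T r : T) : S) = algebraMap R S r := fun r => by simp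
  have hpair : ∀ i j : ℕ, ((fT'.coeff i * algebraMap R T (b j) : T) : S) =
      fS.coeff i * ιS (b j) := fun i j => by
    push_cast
    rw [hτ i, hιS]
  choose P Q Cc Dd g1' g2' g3' using
    fun ij : ℕ × ℕ => hId (fT'.coeff ij.1 * algebraMap R T (b ij.2))
  have g1 : ∀ i j, ιS (P (i,j)) + ιS (Q (i,j)) * (fS.coeff i * ιS (b j)) = 1 := fun i j => by
    have := g1' (i, j); rwa [hpair i j] at this
  have g2 : ∀ i j, ιS (Q (i,j)) * (fS.coeff i * ιS (b j)) = ιS (Cc (i,j)) := fun i j => by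
    have := g2' (i, j); rwa [hpair i j] at this
  have g3 : ∀ i j, ιS (P (i,j)) * (fS.coeff i * ιS (b j)) = ιS (Dd (i,j)) := fun i j => by
    have := g3' (i, j); rwa [hpair i j] at this
  -- apply modinv
  obtain ⟨V', hV'fg, hVV'⟩ := modinv hinj fS hfSm a b c d h1 h2 h3
    (fun i j => P (i,j)) (fun i j => Q (i,j)) (fun i j => Cc (i,j)) (fun i j => Dd (i,j))
    g1 g2 g3
  -- now the Dedekind–Mertens argument over A
  set 𝔙 : Submodule A S := Submodule.span A (Set.range fS.coeff) with h𝔙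
  set 𝔜 : Submodule A S := Submodule.span A (Set.range gg.coeff) with h𝔜
  set 𝔪 : Submodule A S := Submodule.span A ({1, x} : Set S) with h𝔪
  set 𝔛 : Submodule A S := Submodule.span A ({x} : Set S) with h𝔛
  set 𝔔 : Submodule A S := 𝔜 * V' with h𝔔
  have hdmeq : 𝔪 * (𝔜 * 𝔜) = 𝔙 * 𝔜 := dm_eq x gg fS hfq
  have hdmsub : 𝔙 ≤ 𝔪 * 𝔜 := dm_sub x gg fS hfq
  have key1 : 𝔪 * (𝔔 * 𝔔) = 𝔔 := by
    have e1 : 𝔪 * (𝔔 * 𝔔) = (𝔪 * (𝔜 * 𝔜)) * (V' * V') := by rw [h𝔔]; ring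
    rw [e1, hdmeq]
    have e2 : (𝔙 * 𝔜) * (V' * V') = (𝔙 * V') * (𝔜 * V') := by ring
    rw [e2, hVV', one_mul]
  have key2 : (1 : Submodule A S) ≤ 𝔪 * 𝔔 := by
    rw [← hVV']
    calc 𝔙 * V' ≤ (𝔪 * 𝔜) * V' := mul_le_mul' hdmsub le_rfl
      _ = 𝔪 * 𝔔 := by rw [h𝔔]; ring
  have h1𝔪 : (1:S) ∈ 𝔪 := subset_span (by left; rfl)
  have hx𝔪 : x ∈ 𝔪 := subset_span (by right; rfl)
  have hx𝔛 : x ∈ 𝔛 := subset_span rfl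
  have hmono2 : ∀ N : Submodule A S, N ≤ 𝔪 * N := by
    intro N
    have : (1 : Submodule A S) ≤ 𝔪 := by
      intro z hz
      rcases Submodule.mem_one.mp hz with ⟨y, rfl⟩
      have : algebraMap A S y = y • (1:S) := by rw [Algebra.algebraMap_eq_smul_one]
      rw [this]
      exact Submodule.smul_mem _ _ h1𝔪
    calc N = 1 * N := (one_mul N).symm
      _ ≤ 𝔪 * N := mul_le_mul' this le_rfl
  have hXle : 𝔛 ≤ 𝔪 := span_mono (by intro z hz; rcases hz with rfl; right; rfl)
  have hQQ : 𝔔 * 𝔔 ≤ 𝔔 := by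
    calc 𝔔 * 𝔔 ≤ 𝔪 * (𝔔 * 𝔔) := hmono2 _
      _ = 𝔔 := key1
  have hXQQ : 𝔛 * (𝔔 * 𝔔) ≤ 𝔔 := by
    calc 𝔛 * (𝔔 * 𝔔) ≤ 𝔪 * (𝔔 * 𝔔) := mul_le_mul' hXle le_rfl
      _ = 𝔔 := key1
  have hXQ2 : (𝔛 * 𝔔) * (𝔛 * 𝔔) ≤ 𝔛 * 𝔔 := by
    have e : (𝔛 * 𝔔) * (𝔛 * 𝔔) = 𝔛 * (𝔛 * (𝔔 * 𝔔)) := by ring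
    rw [e]
    exact mul_le_mul' le_rfl hXQQ
  have hQXQ : 𝔔 * (𝔛 * 𝔔) ≤ 𝔔 := by
    have e : 𝔔 * (𝔛 * 𝔔) = 𝔛 * (𝔔 * 𝔔) := by ring
    rw [e]
    exact hXQQ
  -- the multiplicatively closed f.g. module
  set 𝔗 : Submodule A S := (1 : Submodule A S) ⊔ 𝔔 ⊔ 𝔛 * 𝔔 with h𝔗
  have hTT : 𝔗 * 𝔗 ≤ 𝔗 := by
    have l1 : (1 : Submodule A S) ≤ 𝔗 := le_trans le_sup_left le_sup_left
    have lQ : 𝔔 ≤ 𝔗 := le_trans le_sup_right le_sup_left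
    have lXQ : 𝔛 * 𝔔 ≤ 𝔗 := le_sup_right
    rw [h𝔗, Submodule.sup_mul, Submodule.sup_mul]
    refine sup_le (sup_le ?_ ?_) ?_
    · rw [one_mul]
    · rw [Submodule.mul_sup, Submodule.mul_sup]
      refine sup_le (sup_le ?_ ?_) ?_
      · rw [mul_one]; exact lQ
      · exact le_trans hQQ lQ
      · exact le_trans hQXQ lQ
    · rw [Submodule.mul_sup, Submodule.mul_sup]
      refine sup_le (sup_le ?_ ?_) ?_
      · rw [mul_one]; exact lXQ
      · have e : (𝔛 * 𝔔) * 𝔔 = 𝔛 * (𝔔 * 𝔔) := by ring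
        rw [e]
        exact le_trans hXQQ lQ
      · exact le_trans hXQ2 lXQ
  have hT1 : (1:S) ∈ 𝔗 :=
    Submodule.mem_sup_left (Submodule.mem_sup_left (Submodule.mem_one.mpr ⟨1, map_one _⟩))
  have hTfg : 𝔗.FG := by
    have hQfg : 𝔔.FG := Submodule.FG.mul (fg_span_range_coeff gg) hV'fg
    refine Submodule.FG.sup (Submodule.FG.sup ?_ hQfg) ?_
    · exact ⟨{1}, by rw [Finset.coe_singleton, Submodule.one_eq_span]⟩
    · exact Submodule.FG.mul ⟨{x}, by rw [Finset.coe_singleton]⟩ hQfg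
  have hTA : ∀ ξ ∈ 𝔗, ξ ∈ A := by
    intro ξ hξ
    have h1 : IsIntegral A ξ :=
      isIntegral_of_mem_mulClosed_fg 𝔗 hT1 (fun p hp q hq => hTT (mul_mem_mul hp hq)) hTfg hξ
    exact isIntegral_trans ξ h1
  -- extract the witnesses
  have h1mem : (1:S) ∈ 𝔪 * 𝔔 := by
    apply key2
    exact Submodule.mem_one.mpr ⟨1, map_one _⟩
  have hdecomp : ∃ α β : S, α ∈ 𝔔 ∧ β ∈ 𝔔 ∧ (1:S) = α + x * β := by
    refine Submodule.mul_induction_on h1mem ?_ ?_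
    · intro mm hmm q hq
      rcases mem_span_pair.mp hmm with ⟨c1, c2, rfl⟩
      refine ⟨c1 • q, c2 • q, Submodule.smul_mem _ _ hq, Submodule.smul_mem _ _ hq, ?_⟩
      rw [add_mul, smul_mul_assoc, smul_mul_assoc, one_mul, mul_smul_comm]
    · rintro p q ⟨α1, β1, hα1, hβ1, rfl⟩ ⟨α2, β2, hα2, hβ2, rfl⟩
      exact ⟨α1 + α2, β1 + β2, Submodule.add_mem _ hα1 hα2, Submodule.add_mem _ hβ1 hβ2,
        by ring⟩
  obtain ⟨α, β, hα, hβ, hsum⟩ := hdecomp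
  have lQ : 𝔔 ≤ 𝔗 := le_trans le_sup_right le_sup_left
  refine ⟨α, β, hTA α (lQ hα), hTA β (lQ hβ), ?_, ?_, hsum.symm⟩
  · exact hTA _ (Submodule.mem_sup_right (mul_mem_mul hx𝔛 hα))
  · exact hTA _ (Submodule.mem_sup_right (mul_mem_mul hx𝔛 hβ))

end Main

/-- A ring extension `R ⊆ S` (given by an injective algebra map) is *Prüfer* if every
intermediate ring `T ∈ [R,S]` is integrally closed in `S`, i.e. `R ⊆ S` is a normal pair. -/
def IsPruferExtension (R S : Type*) [CommRing R] [CommRing S] [Algebra R S] : Prop :=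
  ∀ T : Subalgebra R S, ∀ x : S, IsIntegral T x → x ∈ T

/-- A ring extension `R ⊆ S` is *quasi-Prüfer* if the integral closure `\overline{R}` of `R`
in `S` is such that `\overline{R} ⊆ S` is Prüfer, i.e. every intermediate ring of
`[\overline{R}, S]` is integrally closed in `S`. -/
def IsQuasiPruferExtension (R S : Type*) [CommRing R] [CommRing S] [Algebra R S] : Prop :=
  ∀ T : Subalgebra R S, integralClosure R S ≤ T → ∀ x : S, IsIntegral T x → x ∈ T

/-- **Theorem 4.3 (first part).** Every almost-Prüfer extension (one factoring as
`R ⊆ T ⊆ S` with `R ⊆ T` Prüfer and `T ⊆ S` integral) is quasi-Prüfer. -/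
theorem isQuasiPruferExtension_of_almostPrufer {R S : Type*} [CommRing R] [CommRing S]
    [Algebra R S] (hinj : Function.Injective (algebraMap R S))
    (h : ∃ T : Subalgebra R S, IsPruferExtension R T ∧ Algebra.IsIntegral T S) :
    IsQuasiPruferExtension R S := by
  classical
  obtain ⟨T, hPT, hTS⟩ := h
  intro U hU x hx
  by_cases htriv : Subsingleton S
  · have : x = (0:S) := Subsingleton.elim _ _
    rw [this]
    exact U.zero_mem
  · haveI : Nontrivial S := not_subsingleton_iff_nontrivial.mp htriv
    -- a monic annihilator of degree ≥ 2 over U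
    obtain ⟨p0, hp0m, hp0root⟩ := hx
    set p : Polynomial U := p0 * X^2 with hp
    have hpm : p.Monic := hp0m.mul (monic_X_pow 2)
    have hproot : eval₂ (algebraMap U S) x p = 0 := by
      rw [hp, eval₂_mul, hp0root, zero_mul]
    set n := p.natDegree with hn
    have hn2 : 2 ≤ n := by
      rw [hn, hp, hp0m.natDegree_mul (monic_X_pow 2), natDegree_X_pow]
      omega
    have hcn : p.coeff n = 1 := hpm.coeff_natDegree
    -- the monic relation for x
    have hsum : ∑ i ∈ Finset.range (n+1), ((p.coeff i : U) : S) * x^i = 0 := by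
      have := hproot
      rw [eval₂_eq_sum_range] at this
      exact this
    have hxn : x^n = ∑ i ∈ Finset.range n, ((-(p.coeff i) : U) : S) * x^i := by
      have h' := hsum
      rw [Finset.sum_range_succ, hcn] at h'
      have : ((1 : U) : S) * x^n = x^n := by rw [OneMemClass.coe_one, one_mul]
      rw [this] at h'
      have h'' : x ^ n = -∑ i ∈ Finset.range n, ((p.coeff i : U) : S) * x ^ i := by
        linear_combination h'
      rw [h'']
      rw [← Finset.sum_neg_distrib]
      refine Finset.sum_congr rfl ?_
      intro i _
      push_cast
      ring
    -- invertibility data for x over the integral closure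
    obtain ⟨α, β, hαA, hβA, hxαA, hxβA, hsum1⟩ := inv_pair hinj T hPT hTS x
    set ᾱ : U := ⟨α, hU hαA⟩ with hᾱ
    set βb : U := ⟨β, hU hβA⟩ with hβb
    set b : U := ⟨x * β, hU hxβA⟩ with hb
    have hsumU : ᾱ + b = (1 : U) := by
      apply Subtype.ext
      push_cast
      exact hsum1
    -- the conductor ideal
    set Jset : Set U := {u : U | ∀ k, k ≤ n → (u : S) * x^k ∈ U} with hJset
    set J : Ideal U := {
      carrier := Jset
      add_mem' := fun {u v} hu hv k hk => by
        push_cast [add_mul]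
        exact U.add_mem (hu k hk) (hv k hk)
      zero_mem' := fun k hk => by
        push_cast [zero_mul]
        exact U.zero_mem
      smul_mem' := fun c {u} hu k hk => by
        have : ((c • u : U) : S) * x ^ k = (c : S) * ((u : S) * x ^ k) := by
          push_cast [smul_eq_mul]
          ring
        rw [this]
        exact U.mul_mem c.2 (hu k hk) } with hJ
    have hmemJ : ∀ u : U, u ∈ J ↔ (∀ k, k ≤ n → (u : S) * x^k ∈ U) := fun u => Iff.rfl
    -- J is not contained in any maximal ideal
    have hJtop : J = ⊤ := by
      by_contra hne
      obtain ⟨M, hMmax, hMle⟩ := Ideal.exists_le_maximal J hne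
      have hMprime : M.IsPrime := hMmax.isPrime
      have h1M : (1 : U) ∉ M :=
        fun hmem => hMprime.ne_top (Ideal.eq_top_of_isUnit_mem M hmem isUnit_one)
      -- a generic witness construction
      have hwit : ∀ γ : U, (γ : S) ∈ integralClosure R S → x * (γ : S) ∈ integralClosure R S →
          γ ∉ M → False := by
        intro γ hγA hxγA hγM
        have hJmem : γ^n ∈ J := by
          rw [hmemJ]
          intro k hk
          have hγpow : (γ:S)^n = (γ:S)^(n-k) * (γ:S)^k := by
            rw [← pow_add, Nat.sub_add_cancel hk]
          have hcalc : ((γ^n : U) : S) * x^k = (γ : S)^(n-k) * (x * (γ:S))^k := by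
            push_cast
            rw [hγpow, mul_pow]
            ring
          rw [hcalc]
          exact U.mul_mem (U.pow_mem (hU hγA) _) (U.pow_mem (hU hxγA) _)
        have : γ^n ∈ M := hMle hJmem
        exact hγM (hMprime.mem_of_pow_mem n this)
      by_cases hαM : ᾱ ∉ M
      · exact hwit ᾱ hαA hxαA hαM
      · by_cases hβM : βb ∉ M
        · exact hwit βb hβA hxβA hβM
        · push_neg at hαM hβM
          have hbM : b ∉ M := by
            intro hmem
            have : (1 : U) ∈ M := by rw [← hsumU]; exact Ideal.add_mem M hαM hmem
            exact h1M this
          have hbn : b^n = ∑ i ∈ Finset.range n, (-(p.coeff i)) * βb^(n-i) * b^i := by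
            apply Subtype.ext
            push_cast
            calc (x * β)^n = x^n * β^n := by rw [mul_pow]
              _ = (∑ i ∈ Finset.range n, ((-(p.coeff i) : U) : S) * x^i) * β^n := by rw [hxn]
              _ = ∑ i ∈ Finset.range n, ((-(p.coeff i) : U) : S) * β^(n-i) * (x*β)^i := by
                  rw [Finset.sum_mul]
                  refine Finset.sum_congr rfl ?_
                  intro i hi
                  have hin : i ≤ n := Nat.le_of_lt (Finset.mem_range.mp hi)
                  have hβsplit : (β:S)^n = β^(n-i) * β^i := by
                    rw [← pow_add, Nat.sub_add_cancel hin]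
                  rw [mul_pow, hβsplit]
                  ring
          have hbnM : b^n ∈ M := by
            rw [hbn]
            refine Ideal.sum_mem M ?_
            intro i hi
            have hin : i < n := Finset.mem_range.mp hi
            have hβpow : βb^(n-i) ∈ M := by
              have he : n - i = (n - i - 1) + 1 := by omega
              rw [he, pow_succ]
              exact Ideal.mul_mem_left M _ hβM
            exact Ideal.mul_mem_right _ M (Ideal.mul_mem_left M _ hβpow)
          exact hbM (hMprime.mem_of_pow_mem n hbnM)
    -- conclude : x ∈ U
    have h1J : (1 : U) ∈ J := by rw [hJtop]; trivial
    have hx1 := (hmemJ 1).mp h1J 1 (by omega)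
    rw [OneMemClass.coe_one, one_mul, pow_one] at hx1
    exact hx1
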